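/- Let n ≥ 1 and s ≤ n. Any subset of the grid H_n = {0,…,n−1} × {0,…,n−1} that is a union of s stack-paths has at most Σ_{i=0}^{s−1}(2n − 1 − 2i) = 2ns − s² points, and this bound is attained: there exist s pairwise disjoint stack-paths in H_n whose union has exactly 2ns − s² points. -/

import Mathlib

namespace MixedPaper

/-- A queue-path: any two of its points are comparable in the componentwise order. -/
def IsQueuePath (P : Set (ℤ × ℤ)) : Prop :=
  ∀ p ∈ P, ∀ p' ∈ P, (p.1 ≤ p'.1 ∧ p.2 ≤ p'.2) ∨ (p'.1 ≤ p.1 ∧ p'.2 ≤ p.2)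

/-- A stack-path: any two of its points are comparable in the order that is
increasing in the first and decreasing in the second coordinate. -/
def IsStackPath (P : Set (ℤ × ℤ)) : Prop :=
  ∀ p ∈ P, ∀ p' ∈ P, (p.1 ≤ p'.1 ∧ p'.2 ≤ p.2) ∨ (p'.1 ≤ p.1 ∧ p.2 ≤ p'.2)

/-- The grid `H_n = {0,…,n-1} × {0,…,n-1} ⊆ ℤ²`. -/
def gridH (n : ℕ) : Set (ℤ × ℤ) :=
  {p | 0 ≤ p.1 ∧ p.1 < n ∧ 0 ≤ p.2 ∧ p.2 < n}

/-- For `n ≥ 1` and `s ≤ n`, any subset of the grid `H_n` that is a union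
of `s` stack-paths has at most `Σ_{i=0}^{s-1} (2n − 1 − 2i) = 2ns − s²` points, and the
bound is attained by `s` pairwise disjoint stack-paths in `H_n`. -/
lemma sum_min_aux (m s : ℕ) (hs : s ≤ m) :
    2 * (∑ j ∈ Finset.range m, min s (j + 1)) + s ^ 2 = 2 * m * s + s := by
  induction m with
  | zero => interval_cases s; simp
  | succ m ih =>
    by_cases hsm : s ≤ m
    · rw [Finset.sum_range_succ, show min s (m + 1) = s by omega]
      have h := ih hsm
      ring_nf at h ⊢
      linarith
    · have hseq : s = m + 1 := by omega
      subst hseq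
      have h1 : ∀ j ∈ Finset.range (m + 1), min (m + 1) (j + 1) = j + 1 := by
        intro j hj; rw [Finset.mem_range] at hj; omega
      rw [Finset.sum_congr rfl h1]
      have h2 : (∑ j ∈ Finset.range (m + 1), (j + 1)) = ∑ i ∈ Finset.range (m + 2), i := by
        rw [Finset.sum_range_succ' (fun i => i) (m + 1)]
        simp
      rw [h2]
      have h3 : (∑ i ∈ Finset.range (m + 2), i) * 2 = (m + 2) * (m + 1) := by
        rw [Finset.sum_range_id_mul_two]; congr 1
      ring_nf at h3 ⊢
      linarith

lemma sum_diag_eq (m s : ℕ) (hs : s ≤ m + 1) :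
    (∑ k ∈ Finset.range (2 * m + 1), min s (min (k + 1) (2 * m + 1 - k))) + s ^ 2
      = 2 * (m + 1) * s := by
  have hsplit : (∑ k ∈ Finset.range (2 * m + 1), min s (min (k + 1) (2 * m + 1 - k)))
      = (∑ k ∈ Finset.Ico 0 (m + 1), min s (min (k + 1) (2 * m + 1 - k)))
        + ∑ k ∈ Finset.Ico (m + 1) (2 * m + 1), min s (min (k + 1) (2 * m + 1 - k)) := by
    rw [Finset.range_eq_Ico, ← Finset.sum_Ico_consecutive _ (by omega : 0 ≤ m + 1) (by omega)]
  have h1 : (∑ k ∈ Finset.Ico 0 (m + 1), min s (min (k + 1) (2 * m + 1 - k)))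
      = ∑ k ∈ Finset.range (m + 1), min s (k + 1) := by
    rw [← Finset.range_eq_Ico]
    refine Finset.sum_congr rfl fun k hk => ?_
    rw [Finset.mem_range] at hk
    congr 1
    omega
  have h2 : (∑ k ∈ Finset.Ico (m + 1) (2 * m + 1), min s (min (k + 1) (2 * m + 1 - k)))
      = ∑ j ∈ Finset.range m, min s (j + 1) := by
    rw [Finset.sum_Ico_eq_sum_range, show 2 * m + 1 - (m + 1) = m by omega]
    have hcg : ∀ j ∈ Finset.range m,
        min s (min (m + 1 + j + 1) (2 * m + 1 - (m + 1 + j))) = min s (m - j) := by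
      intro j hj; rw [Finset.mem_range] at hj; congr 1; omega
    rw [Finset.sum_congr rfl hcg]
    calc (∑ j ∈ Finset.range m, min s (m - j))
        = ∑ j ∈ Finset.range m, min s (m - 1 - j + 1) := by
          refine Finset.sum_congr rfl fun j hj => ?_
          rw [Finset.mem_range] at hj; congr 1; omega
      _ = ∑ j ∈ Finset.range m, min s (j + 1) :=
          Finset.sum_range_reflect (fun j => min s (j + 1)) m
  have h3 : (∑ k ∈ Finset.range (m + 1), min s (k + 1))
      = (∑ j ∈ Finset.range m, min s (j + 1)) + s := by
    rw [Finset.sum_range_succ, show min s (m + 1) = s by omega]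
  have h4 := sum_min_aux (m + 1) s hs
  rw [Finset.sum_range_succ, show min s (m + 1) = s by omega] at h4
  omega

lemma upper (m s : ℕ) (hs : s ≤ m + 1)
    (S : Fin s → Set (ℤ × ℤ)) (hS : ∀ i, IsStackPath (S i))
    (hsub : (⋃ i, S i) ⊆ gridH (m + 1)) :
    ((⋃ i, S i).ncard : ℤ) ≤ 2 * (m + 1) * s - s ^ 2 := by
  classical
  rcases Nat.eq_zero_or_pos s with hs0 | hs0
  · subst hs0
    simp
  haveI : Inhabited (Fin s) := ⟨⟨0, hs0⟩⟩
  have hgfin : (gridH (m + 1)).Finite := by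
    have : gridH (m + 1) ⊆ ↑((Finset.Ico (0:ℤ) (m + 1)) ×ˢ (Finset.Ico (0:ℤ) (m + 1))) := by
      intro p hp
      obtain ⟨h1, h2, h3, h4⟩ := hp
      simp only [Finset.coe_product, Set.mem_prod, Set.mem_Ico, Finset.coe_Ico]
      push_cast at h2 h4 ⊢
      exact ⟨⟨h1, h2⟩, ⟨h3, h4⟩⟩
    exact Set.Finite.subset (Finset.finite_toSet _) this
  have hUfin : (⋃ i, S i).Finite := hgfin.subset hsub
  set F : Finset (ℤ × ℤ) := hUfin.toFinset with hF
  have hmemF : ∀ p, p ∈ F ↔ p ∈ ⋃ i, S i := fun p => hUfin.mem_toFinset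
  have hgridF : ∀ p ∈ F, 0 ≤ p.1 ∧ p.1 < (m:ℤ) + 1 ∧ 0 ≤ p.2 ∧ p.2 < (m:ℤ) + 1 := by
    intro p hp
    have := hsub ((hmemF p).1 hp)
    obtain ⟨h1, h2, h3, h4⟩ := this
    push_cast at h2 h4
    exact ⟨h1, h2, h3, h4⟩
  have hncard : (⋃ i, S i).ncard = F.card := by
    rw [← hUfin.coe_toFinset, Set.ncard_coe_finset]
  have hmaps : ∀ p ∈ F, (p.1 - p.2 + (m:ℤ)).toNat ∈ Finset.range (2 * m + 1) := by
    intro p hp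
    have := hgridF p hp
    simp only [Finset.mem_range]
    omega
  have hdecomp := Finset.card_eq_sum_card_fiberwise hmaps
  have hfib : ∀ k ∈ Finset.range (2 * m + 1),
      (F.filter (fun p => (p.1 - p.2 + (m:ℤ)).toNat = k)).card
        ≤ min s (min (k + 1) (2 * m + 1 - k)) := by
    intro k hk
    rw [Finset.mem_range] at hk
    refine Nat.le_min.2 ⟨?_, ?_⟩
    · have hle := Finset.card_le_card_of_injOn
        (f := fun p => if h : ∃ i, p ∈ S i then h.choose else default)
        (s := F.filter (fun p => (p.1 - p.2 + (m:ℤ)).toNat = k))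
        (t := (Finset.univ : Finset (Fin s)))
        (fun p _ => Finset.mem_univ _) ?_
      · simpa using hle
      · intro p hp p' hp' heq
        simp only [Finset.mem_coe, Finset.mem_filter] at hp hp'
        have hex : ∃ i, p ∈ S i := Set.mem_iUnion.1 ((hmemF p).1 hp.1)
        have hex' : ∃ i, p' ∈ S i := Set.mem_iUnion.1 ((hmemF p').1 hp'.1)
        simp only [dif_pos hex, dif_pos hex'] at heq
        have h1 : p ∈ S hex.choose := hex.choose_spec
        have h2 : p' ∈ S hex.choose := heq ▸ hex'.choose_spec
        have hst := hS hex.choose p h1 p' h2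
        have hb := hgridF p hp.1
        have hb' := hgridF p' hp'.1
        have e1 := hp.2
        have e2 := hp'.2
        have : p.1 = p'.1 ∧ p.2 = p'.2 := by omega
        exact Prod.ext this.1 this.2
    · have hle := Finset.card_le_card_of_injOn (f := fun p => p.1)
        (s := F.filter (fun p => (p.1 - p.2 + (m:ℤ)).toNat = k))
        (t := Finset.Ico (max 0 ((k:ℤ) - m)) (min ((m:ℤ) + 1) ((k:ℤ) + 1)))
        ?_ ?_
      · rw [Int.card_Ico] at hle
        omega
      · intro p hp
        simp only [Finset.mem_coe, Finset.mem_filter] at hp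
        have hb := hgridF p hp.1
        have e1 := hp.2
        simp only [Finset.mem_coe, Finset.mem_Ico]
        show max 0 ((k:ℤ) - m) ≤ p.1 ∧ p.1 < min ((m:ℤ) + 1) ((k:ℤ) + 1)
        omega
      · intro p hp p' hp' heq
        simp only [Finset.mem_coe, Finset.mem_filter] at hp hp'
        have e1 := hp.2; have e2 := hp'.2
        have hb := hgridF p hp.1
        have hb' := hgridF p' hp'.1
        simp only at heq
        have : p.1 = p'.1 ∧ p.2 = p'.2 := by omega
        exact Prod.ext this.1 this.2
  have hsum : F.card ≤ ∑ k ∈ Finset.range (2 * m + 1), min s (min (k + 1) (2 * m + 1 - k)) := by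
    rw [hdecomp]
    exact Finset.sum_le_sum hfib
  have hval := sum_diag_eq m s hs
  have h1 : ((⋃ i, S i).ncard : ℤ)
      ≤ ((∑ k ∈ Finset.range (2 * m + 1), min s (min (k + 1) (2 * m + 1 - k)) : ℕ) : ℤ) := by
    rw [hncard]; exact_mod_cast hsum
  have h2 : ((∑ k ∈ Finset.range (2 * m + 1), min s (min (k + 1) (2 * m + 1 - k)) : ℕ) : ℤ)
      + (s:ℤ) ^ 2 = 2 * ((m:ℤ) + 1) * s := by exact_mod_cast congrArg (Nat.cast : ℕ → ℤ) hval

  linarith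


lemma lower (n s : ℕ) (hn : 1 ≤ n) (hs : s ≤ n) :
    ∃ S : Fin s → Set (ℤ × ℤ), (∀ i, IsStackPath (S i)) ∧ (∀ i, S i ⊆ gridH n) ∧
      (∀ i i' : Fin s, i ≠ i' → Disjoint (S i) (S i')) ∧
      ((⋃ i, S i).ncard : ℤ) = 2 * n * s - s ^ 2 := by
  refine ⟨fun i => {p | 0 ≤ p.1 ∧ p.1 < n ∧ 0 ≤ p.2 ∧ p.2 < n ∧ min p.1 p.2 = ((i : ℕ) : ℤ)},
    ?_, ?_, ?_, ?_⟩
  · intro i p hp p' hp'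
    simp only [Set.mem_setOf_eq] at hp hp'
    omega
  · intro i p hp
    simp only [Set.mem_setOf_eq] at hp
    exact ⟨hp.1, hp.2.1, hp.2.2.1, hp.2.2.2.1⟩
  · intro i i' hne
    rw [Set.disjoint_left]
    intro p hp hp'
    simp only [Set.mem_setOf_eq] at hp hp'
    have : ((i : ℕ) : ℤ) ≠ ((i' : ℕ) : ℤ) := by
      simp only [ne_eq, Nat.cast_inj]
      exact fun h => hne (Fin.ext h)
    omega
  · have hUeq : (⋃ i : Fin s, {p : ℤ × ℤ |
        0 ≤ p.1 ∧ p.1 < n ∧ 0 ≤ p.2 ∧ p.2 < n ∧ min p.1 p.2 = ((i : ℕ) : ℤ)})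
        = ↑(((Finset.Ico (0:ℤ) n) ×ˢ (Finset.Ico (0:ℤ) n))
            \ ((Finset.Ico (s:ℤ) n) ×ˢ (Finset.Ico (s:ℤ) n))) := by
      ext p
      simp only [Set.mem_iUnion, Set.mem_setOf_eq, Finset.coe_sdiff, Set.mem_diff,
        Finset.coe_product, Set.mem_prod, Finset.coe_Ico, Set.mem_Ico]
      constructor
      · rintro ⟨i, h1, h2, h3, h4, h5⟩
        have hi : (i : ℕ) < s := i.isLt
        refine ⟨⟨⟨h1, h2⟩, ⟨h3, h4⟩⟩, ?_⟩
        intro ⟨⟨ha, _⟩, ⟨hb, _⟩⟩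
        omega
      · rintro ⟨⟨⟨h1, h2⟩, ⟨h3, h4⟩⟩, hno⟩
        have hmin : min p.1 p.2 < (s : ℤ) := by
          by_contra hc
          exact hno ⟨⟨by omega, h2⟩, ⟨by omega, h4⟩⟩
        refine ⟨⟨(min p.1 p.2).toNat, by omega⟩, h1, h2, h3, h4, ?_⟩
        simp only [Fin.val_mk]
        omega
    rw [hUeq, Set.ncard_coe_finset]
    have hsub : ((Finset.Ico (s:ℤ) n) ×ˢ (Finset.Ico (s:ℤ) n))
        ⊆ ((Finset.Ico (0:ℤ) n) ×ˢ (Finset.Ico (0:ℤ) n)) :=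
      Finset.product_subset_product (Finset.Ico_subset_Ico (by omega) le_rfl)
        (Finset.Ico_subset_Ico (by omega) le_rfl)
    rw [Finset.card_sdiff_of_subset hsub, Finset.card_product, Finset.card_product,
      Int.card_Ico, Int.card_Ico]
    have h1 : ((n:ℤ) - 0).toNat = n := by omega
    have h2 : ((n:ℤ) - s).toNat = n - s := by omega
    rw [h1, h2]
    have hle : (n - s) * (n - s) ≤ n * n := Nat.mul_le_mul (by omega) (by omega)
    push_cast [hle, hs]
    ring

theorem stackPaths_cover_bound (n s : ℕ) (hn : 1 ≤ n) (hs : s ≤ n) :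
    (∀ S : Fin s → Set (ℤ × ℤ), (∀ i, IsStackPath (S i)) → (⋃ i, S i) ⊆ gridH n →
      ((⋃ i, S i).ncard : ℤ) ≤ 2 * n * s - s ^ 2) ∧
    (∃ S : Fin s → Set (ℤ × ℤ), (∀ i, IsStackPath (S i)) ∧ (∀ i, S i ⊆ gridH n) ∧
      (∀ i i' : Fin s, i ≠ i' → Disjoint (S i) (S i')) ∧
      ((⋃ i, S i).ncard : ℤ) = 2 * n * s - s ^ 2) := by
  constructor
  · intro S hS hsub
    obtain ⟨m, rfl⟩ : ∃ m, n = m + 1 := ⟨n - 1, by omega⟩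
    exact_mod_cast upper m s (by omega) S hS hsub
  · exact lower n s hn hs

end MixedPaper
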